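/- arXiv:2010.02750 — 3 statements merged into one kernel-verified Lean document; each statement's English description precedes it below -/
import Mathlib

section
/- For any nonzero rational number q, the product of the real absolute value |q| with the p-adic absolute values |q|_p over all primes p equals 1. -/
lemma padic_finprod_nat (n : ℕ) (hn : n ≠ 0) :
    ∏ᶠ p : Nat.Primes, ((padicNorm p n : ℝ)) = (n : ℝ)⁻¹ := by
  classical
  set S : Finset Nat.Primes :=
    n.primeFactors.attach.image
      (fun x => (⟨x.1, Nat.prime_of_mem_primeFactors x.2⟩ : Nat.Primes)) with hS
  have hsub : (Function.mulSupport fun p : Nat.Primes => ((padicNorm p n : ℝ))) ⊆ ↑S := by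
    intro p hp
    have hmem : p.1 ∈ n.primeFactors := by
      rw [Nat.mem_primeFactors]
      refine ⟨p.2, ?_, hn⟩
      by_contra hnd
      haveI : Fact (Nat.Prime p.1) := ⟨p.2⟩
      exact hp (by simp [(padicNorm.nat_eq_one_iff (p := p.1) n).2 hnd])
    rw [hS]
    exact Finset.mem_coe.2 (Finset.mem_image.2 ⟨⟨p.1, hmem⟩, Finset.mem_attach _ _, rfl⟩)
  rw [finprod_eq_prod_of_mulSupport_subset _ hsub, hS]
  erw [Finset.prod_image (by intro a _ b _ h; exact Subtype.ext (congrArg (fun z : Nat.Primes => z.1) h)),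
    Finset.prod_attach n.primeFactors (fun p => ((padicNorm p n : ℝ)))]
  have key : ∀ p ∈ n.primeFactors, ((padicNorm p n : ℝ)) = ((p:ℝ) ^ (n.factorization p))⁻¹ := by
    intro p hp
    have hp' := Nat.prime_of_mem_primeFactors hp
    have hn' : (n : ℚ) ≠ 0 := by exact_mod_cast hn
    have hv : padicValRat p (n:ℚ) = (padicValNat p n : ℤ) := by
      exact_mod_cast padicValRat.of_nat
    rw [padicNorm.eq_zpow_of_nonzero hn', hv, Nat.factorization_def n hp']
    push_cast
    simp [zpow_neg, zpow_natCast]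
  rw [Finset.prod_congr rfl key, Finset.prod_inv_distrib]
  congr 1
  have h0 := Nat.factorization_prod_pow_eq_self hn
  rw [Finsupp.prod, Nat.support_factorization] at h0
  exact_mod_cast congrArg (Nat.cast : ℕ → ℝ) h0

lemma padic_mulSupport_finite_nat (n : ℕ) (hn : n ≠ 0) :
    (Function.mulSupport fun p : Nat.Primes => ((padicNorm p (n:ℚ) : ℝ))).Finite := by
  classical
  apply Set.Finite.subset (n.primeFactors.attach.image
      (fun x => (⟨x.1, Nat.prime_of_mem_primeFactors x.2⟩ : Nat.Primes))).finite_toSet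
  intro p hp
  have hmem : p.1 ∈ n.primeFactors := by
    rw [Nat.mem_primeFactors]
    refine ⟨p.2, ?_, hn⟩
    by_contra hnd
    haveI : Fact (Nat.Prime p.1) := ⟨p.2⟩
    exact hp (by simp [(padicNorm.nat_eq_one_iff (p := p.1) n).2 hnd])
  simp only [Finset.coe_image, Set.mem_image, Finset.mem_coe, Finset.mem_attach]
  exact ⟨⟨p.1, hmem⟩, by simp [Subtype.ext_iff]⟩

lemma padic_int_eq_natAbs (m : ℤ) (p : Nat.Primes) :
    padicNorm p (m:ℚ) = padicNorm p (m.natAbs : ℚ) := by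
  have : (m:ℚ) = (m.natAbs:ℚ) ∨ (m:ℚ) = -(m.natAbs:ℚ) := by
    rcases Int.natAbs_eq m with h | h
    · left; conv_lhs => rw [h]
      push_cast [Nat.cast_natAbs]; ring
    · right; conv_lhs => rw [h]
      push_cast [Nat.cast_natAbs]; ring
  rcases this with h | h
  · rw [h]
  · rw [h, padicNorm.neg]

lemma padic_finprod_int (m : ℤ) (hm : m ≠ 0) :
    ∏ᶠ p : Nat.Primes, ((padicNorm p (m:ℚ) : ℝ)) = |(m:ℝ)|⁻¹ := by
  have h1 : ∏ᶠ p : Nat.Primes, ((padicNorm p (m:ℚ) : ℝ))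
      = ∏ᶠ p : Nat.Primes, ((padicNorm p (m.natAbs:ℚ) : ℝ)) :=
    finprod_congr fun p => by rw [padic_int_eq_natAbs]
  rw [h1, padic_finprod_nat m.natAbs (Int.natAbs_ne_zero.2 hm)]
  congr 1
  rw [Nat.cast_natAbs, Int.cast_abs]

/-- **Adelic product formula.** For any nonzero rational number `q`, the product of the
real (Archimedean) absolute value of `q` with the `p`-adic absolute values `|q|_p`
over all primes `p` equals `1`.  (The product is well-defined since `|q|_p = 1` for all
but finitely many primes, and we express it as a `finprod`.) -/
theorem adelic_product_formula (q : ℚ) (hq : q ≠ 0) :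
    |(q : ℝ)| * ∏ᶠ p : Nat.Primes, ((padicNorm p q : ℝ)) = 1 := by
  have hN : q.num ≠ 0 := Rat.num_ne_zero.2 hq
  have hD : q.den ≠ 0 := q.den_nz
  have hfN : (Function.mulSupport fun p : Nat.Primes => ((padicNorm p (q.num:ℚ) : ℝ))).Finite := by
    have := padic_mulSupport_finite_nat q.num.natAbs (Int.natAbs_ne_zero.2 hN)
    refine Set.Finite.subset this ?_
    intro p hp
    simpa [Function.mulSupport, padic_int_eq_natAbs] using hp
  have hfD : (Function.mulSupport fun p : Nat.Primes => ((padicNorm p (q.den:ℚ) : ℝ))).Finite :=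
    padic_mulSupport_finite_nat q.den hD
  have key : ∏ᶠ p : Nat.Primes, ((padicNorm p q : ℝ))
      = ∏ᶠ p : Nat.Primes, (((padicNorm p (q.num:ℚ) : ℝ)) / ((padicNorm p (q.den:ℚ) : ℝ))) := by
    apply finprod_congr
    intro p
    haveI : Fact (Nat.Prime p.1) := ⟨p.2⟩
    conv_lhs => rw [← Rat.num_div_den q]
    rw [padicNorm.div]
    push_cast
    ring
  rw [key, finprod_div_distrib hfN hfD, padic_finprod_int q.num hN,
    padic_finprod_nat q.den hD]
  have hqr : (q:ℝ) = (q.num:ℝ) / (q.den:ℝ) := by rw [Rat.cast_def]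
  have hd0 : (q.den:ℝ) > 0 := by exact_mod_cast q.pos
  have hn0 : |(q.num:ℝ)| ≠ 0 := by
    simp only [ne_eq, abs_eq_zero, Int.cast_eq_zero]; exact hN
  rw [hqr, abs_div, abs_of_pos hd0]
  field_simp
end

section
/- If L₁ and L₂ are lattices in a two-dimensional p-adic symplectic space (F, Δ) with equal Haar measures |L₁| = |L₂|, then there exists a symplectic transformation S ∈ Sp(F, Δ) such that S·L₁ = L₂. -/
open MeasureTheory Pointwise

/-- A lattice in the two-dimensional space `Fin 2 → ℚ_[p]` is the `ℤ_[p]`-span of a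
`ℚ_[p]`-basis. -/
def IsLattice {p : ℕ} [Fact p.Prime] (L : Set (Fin 2 → ℚ_[p])) : Prop :=
  ∃ b : Module.Basis (Fin 2) ℚ_[p] (Fin 2 → ℚ_[p]),
    L = {x | ∃ a c : ℤ_[p], x = (a : ℚ_[p]) • b 0 + (c : ℚ_[p]) • b 1}

/-- The dual lattice `L* = {u : Δ(u,v) ∈ ℤ_p for all v ∈ L}`. -/
def dualLattice {p : ℕ} [Fact p.Prime]
    (Δ : (Fin 2 → ℚ_[p]) →ₗ[ℚ_[p]] (Fin 2 → ℚ_[p]) →ₗ[ℚ_[p]] ℚ_[p])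
    (L : Set (Fin 2 → ℚ_[p])) : Set (Fin 2 → ℚ_[p]) :=
  {u | ∀ v ∈ L, ‖Δ u v‖ ≤ 1}

namespace SympTrans

variable {p : ℕ} [hp : Fact p.Prime]

/-- The `ℤ_p`-span of a basis. -/
def latSet (b : Module.Basis (Fin 2) ℚ_[p] (Fin 2 → ℚ_[p])) : Set (Fin 2 → ℚ_[p]) :=
  {x | ∃ a c : ℤ_[p], x = (a : ℚ_[p]) • b 0 + (c : ℚ_[p]) • b 1}

lemma isLattice_latSet (b : Module.Basis (Fin 2) ℚ_[p] (Fin 2 → ℚ_[p])) : IsLattice (latSet b) :=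
  ⟨b, rfl⟩

lemma latSet_eq_norm (b : Module.Basis (Fin 2) ℚ_[p] (Fin 2 → ℚ_[p])) :
    latSet b = {x | ‖b.repr x 0‖ ≤ 1 ∧ ‖b.repr x 1‖ ≤ 1} := by
  ext x
  constructor
  · rintro ⟨a, c, rfl⟩
    simp [map_add, _root_.map_smul, Finsupp.single_apply, PadicInt.padic_norm_e_of_padicInt,
      PadicInt.norm_le_one]
  · rintro ⟨h0, h1⟩
    refine ⟨⟨_, h0⟩, ⟨_, h1⟩, ?_⟩
    have := b.sum_repr x
    rw [Fin.sum_univ_two] at this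
    exact this.symm

lemma repr_coord_continuous (b : Module.Basis (Fin 2) ℚ_[p] (Fin 2 → ℚ_[p])) (i : Fin 2) :
    Continuous fun x => b.repr x i := by
  have := (b.coord i).continuous_of_finiteDimensional
  exact this

lemma isClosed_latSet (b : Module.Basis (Fin 2) ℚ_[p] (Fin 2 → ℚ_[p])) : IsClosed (latSet b) := by
  rw [latSet_eq_norm, Set.setOf_and]
  exact IsClosed.inter (isClosed_le (repr_coord_continuous b 0).norm continuous_const)
    (isClosed_le (repr_coord_continuous b 1).norm continuous_const)

lemma latSet_congr {b b' : Module.Basis (Fin 2) ℚ_[p] (Fin 2 → ℚ_[p])} (h0 : b 0 = b' 0)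
    (h1 : b 1 = b' 1) : latSet b = latSet b' := by
  unfold latSet; rw [h0, h1]

variable (Δ : (Fin 2 → ℚ_[p]) →ₗ[ℚ_[p]] (Fin 2 → ℚ_[p]) →ₗ[ℚ_[p]] ℚ_[p])

lemma skew (halt : ∀ v, Δ v v = 0) (v w : Fin 2 → ℚ_[p]) : Δ w v = -Δ v w := by
  have h := halt (v + w)
  simp only [map_add, LinearMap.add_apply, halt v, halt w] at h
  linear_combination h

lemma delta_formula (halt : ∀ v, Δ v v = 0) (e f : Fin 2 → ℚ_[p]) (a b c d : ℚ_[p]) :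
    Δ (a • e + b • f) (c • e + d • f) = (a * d - b * c) * Δ e f := by
  have hfe := skew Δ halt e f
  simp only [map_add, _root_.map_smul, LinearMap.add_apply, LinearMap.smul_apply,
    halt e, halt f, hfe, smul_eq_mul]
  ring

/-- scale the `i`-th basis vector by a nonzero scalar `t` -/
noncomputable def scaleB (b : Module.Basis (Fin 2) ℚ_[p] (Fin 2 → ℚ_[p])) (t : ℚ_[p]) (ht : t ≠ 0)
    (i : Fin 2) : Module.Basis (Fin 2) ℚ_[p] (Fin 2 → ℚ_[p]) :=
  b.unitsSMul (fun j => if j = i then Units.mk0 t ht else 1)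

lemma scaleB_self (b : Module.Basis (Fin 2) ℚ_[p] (Fin 2 → ℚ_[p])) (t : ℚ_[p]) (ht : t ≠ 0) (i : Fin 2) :
    scaleB b t ht i i = t • b i := by
  simp [scaleB, Module.Basis.unitsSMul_apply]

lemma scaleB_other (b : Module.Basis (Fin 2) ℚ_[p] (Fin 2 → ℚ_[p])) (t : ℚ_[p]) (ht : t ≠ 0)
    {i j : Fin 2} (h : j ≠ i) : scaleB b t ht i j = b j := by
  simp [scaleB, Module.Basis.unitsSMul_apply, h]

lemma scaleB_repr (b : Module.Basis (Fin 2) ℚ_[p] (Fin 2 → ℚ_[p])) (t : ℚ_[p]) (ht : t ≠ 0)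
    (i : Fin 2) (x : Fin 2 → ℚ_[p]) (j : Fin 2) :
    (scaleB b t ht i).repr x j = (if j = i then t⁻¹ else 1) * b.repr x j := by
  rw [scaleB, Module.Basis.repr_unitsSMul]
  by_cases h : j = i <;> simp [h, smul_eq_mul, Units.smul_def]

/-- scaling by a norm-one scalar doesn't change the lattice -/
lemma latSet_scaleB_unit (b : Module.Basis (Fin 2) ℚ_[p] (Fin 2 → ℚ_[p])) (t : ℚ_[p]) (ht : t ≠ 0)
    (hn : ‖t‖ = 1) (i : Fin 2) : latSet (scaleB b t ht i) = latSet b := by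
  rw [latSet_eq_norm, latSet_eq_norm]
  ext x
  have key : ∀ j, ‖(scaleB b t ht i).repr x j‖ = ‖b.repr x j‖ := by
    intro j
    rw [scaleB_repr]
    have hti : ‖t⁻¹‖ = 1 := by rw [norm_inv, hn]; norm_num
    by_cases h : j = i <;> simp [h, norm_mul, hti]
  simp [key]

lemma exists_adapted (halt : ∀ v, Δ v v = 0)
    (hnd : ∀ v, (∀ w, Δ v w = 0) → v = 0)
    (L : Set (Fin 2 → ℚ_[p])) (hL : IsLattice L) :
    ∃ (b : Module.Basis (Fin 2) ℚ_[p] (Fin 2 → ℚ_[p])) (n : ℤ),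
      Δ (b 0) (b 1) = (p : ℚ_[p]) ^ n ∧ L = latSet b := by
  obtain ⟨b, rfl⟩ := hL
  show ∃ _ n, _ ∧ latSet b = _
  have hc : Δ (b 0) (b 1) ≠ 0 := by
    intro h
    refine b.ne_zero 0 (hnd _ fun w => ?_)
    have hs := b.sum_repr w
    rw [Fin.sum_univ_two] at hs
    rw [← hs, map_add, _root_.map_smul, _root_.map_smul, halt (b 0), h]
    simp
  set c := Δ (b 0) (b 1) with hcdef
  set n := c.valuation with hn
  have hpn : ((p : ℚ_[p]) ^ n) ≠ 0 := zpow_ne_zero _ (by exact_mod_cast hp.1.ne_zero)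
  set u : ℚ_[p] := ((p : ℚ_[p]) ^ n)⁻¹ * c with hu
  have hu0 : u ≠ 0 := mul_ne_zero (inv_ne_zero hpn) hc
  have hun : ‖u‖ = 1 := by
    rw [hu, norm_mul, norm_inv, Padic.norm_p_zpow, Padic.norm_eq_zpow_neg_valuation hc, ← hn]
    exact inv_mul_cancel₀ (zpow_ne_zero _ (Nat.cast_ne_zero.2 hp.1.ne_zero))
  have hui : u⁻¹ ≠ 0 := inv_ne_zero hu0
  refine ⟨scaleB b u⁻¹ hui 0, n, ?_, ?_⟩
  · rw [scaleB_self, scaleB_other b u⁻¹ hui (by norm_num), _root_.map_smul,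
      LinearMap.smul_apply, smul_eq_mul, ← hcdef, hu]
    field_simp
  · rw [latSet_scaleB_unit b u⁻¹ hui (by rw [norm_inv, hun]; norm_num)]

lemma mem_latSet_basis (b : Module.Basis (Fin 2) ℚ_[p] (Fin 2 → ℚ_[p])) (i : Fin 2) :
    b i ∈ latSet b := by
  rw [latSet_eq_norm]
  constructor <;> simp [Finsupp.single_apply] <;> split <;> norm_num

/-- the dual of a unimodular lattice is itself -/
lemma dual_unimodular (halt : ∀ v, Δ v v = 0) (b : Module.Basis (Fin 2) ℚ_[p] (Fin 2 → ℚ_[p]))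
    (hb : Δ (b 0) (b 1) = 1) : dualLattice Δ (latSet b) = latSet b := by
  ext u
  have hsum := b.sum_repr u
  rw [Fin.sum_univ_two] at hsum
  constructor
  · intro h
    have h1 : Δ u (b 1) = b.repr u 0 := by
      have hf := delta_formula Δ halt (b 0) (b 1) (b.repr u 0) (b.repr u 1) 0 1
      rw [hsum, hb] at hf
      simpa using hf
    have h0 : Δ u (b 0) = -(b.repr u 1) := by
      have hf := delta_formula Δ halt (b 0) (b 1) (b.repr u 0) (b.repr u 1) 1 0
      rw [hsum, hb] at hf
      simpa using hf
    rw [latSet_eq_norm]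
    refine ⟨?_, ?_⟩
    · have := h (b 1) (mem_latSet_basis b 1)
      rwa [h1] at this
    · have := h (b 0) (mem_latSet_basis b 0)
      rwa [h0, norm_neg] at this
  · rintro ⟨a, c, rfl⟩ v ⟨a', c', rfl⟩
    rw [delta_formula Δ halt, hb, mul_one]
    have hb1 : ‖(a : ℚ_[p]) * c'‖ ≤ 1 := by
      rw [norm_mul, PadicInt.padic_norm_e_of_padicInt, PadicInt.padic_norm_e_of_padicInt]
      exact mul_le_one₀ a.norm_le_one (norm_nonneg _) c'.norm_le_one
    have hb2 : ‖(c : ℚ_[p]) * a'‖ ≤ 1 := by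
      rw [norm_mul, PadicInt.padic_norm_e_of_padicInt, PadicInt.padic_norm_e_of_padicInt]
      exact mul_le_one₀ c.norm_le_one (norm_nonneg _) a'.norm_le_one
    calc ‖(a : ℚ_[p]) * c' - c * a'‖ ≤ max ‖(a : ℚ_[p]) * c'‖ ‖-((c : ℚ_[p]) * a')‖ := by
          rw [sub_eq_add_neg]; exact Padic.nonarchimedean _ _
      _ ≤ 1 := by rw [norm_neg]; exact max_le hb1 hb2

/-! ### Measure computations -/

lemma p_pow_ne_zero (k : ℕ) : ((p : ℚ_[p]) ^ k) ≠ 0 :=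
  pow_ne_zero _ (by exact_mod_cast hp.1.ne_zero)

/-- basis spanning the sublattice where the second coordinate is divisible by `p^k` -/
noncomputable def shrink (b : Module.Basis (Fin 2) ℚ_[p] (Fin 2 → ℚ_[p])) (k : ℕ) :
    Module.Basis (Fin 2) ℚ_[p] (Fin 2 → ℚ_[p]) :=
  scaleB b ((p : ℚ_[p]) ^ k) (p_pow_ne_zero k) 1

lemma mem_shrink (b : Module.Basis (Fin 2) ℚ_[p] (Fin 2 → ℚ_[p])) (k : ℕ) (x : Fin 2 → ℚ_[p]) :
    x ∈ latSet (shrink b k) ↔ ‖b.repr x 0‖ ≤ 1 ∧ ‖b.repr x 1‖ ≤ (p : ℝ) ^ (-k : ℤ) := by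
  rw [latSet_eq_norm]
  have hpos : (0 : ℝ) < (p : ℝ) ^ (k : ℤ) := by
    apply zpow_pos
    exact_mod_cast hp.1.pos
  have h0 : (shrink b k).repr x 0 = b.repr x 0 := by
    rw [shrink, scaleB_repr]; norm_num
  have h1 : ‖(shrink b k).repr x 1‖ = (p : ℝ) ^ (k : ℤ) * ‖b.repr x 1‖ := by
    rw [shrink, scaleB_repr, if_pos rfl, norm_mul, norm_inv, Padic.norm_p_pow,
      ← zpow_neg, neg_neg]
  constructor
  · rintro ⟨g0, g1⟩
    rw [h0] at g0
    rw [h1] at g1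
    refine ⟨g0, ?_⟩
    have : ‖b.repr x 1‖ ≤ ((p : ℝ) ^ (k : ℤ))⁻¹ * 1 := (le_inv_mul_iff₀ hpos).mpr g1
    simpa [zpow_neg] using this
  · rintro ⟨g0, g1⟩
    refine ⟨by rw [h0]; exact g0, ?_⟩
    rw [h1]
    rw [show ((p : ℝ) ^ (-k : ℤ)) = ((p : ℝ) ^ (k : ℤ))⁻¹ by rw [zpow_neg]] at g1
    calc (p : ℝ) ^ (k : ℤ) * ‖b.repr x 1‖ ≤ (p : ℝ) ^ (k : ℤ) * ((p : ℝ) ^ (k : ℤ))⁻¹ := by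
          exact mul_le_mul_of_nonneg_left g1 hpos.le
      _ = 1 := mul_inv_cancel₀ hpos.ne'

lemma latSet_eq_biUnion (b : Module.Basis (Fin 2) ℚ_[p] (Fin 2 → ℚ_[p])) (k : ℕ) :
    latSet b = ⋃ j ∈ Finset.range (p ^ k),
      ((j : ℚ_[p]) • b 1 +ᵥ latSet (shrink b k)) := by
  have hrepr : ∀ (t : ℚ_[p]) (x : Fin 2 → ℚ_[p]),
      b.repr (-(t • b 1) + x) 0 = b.repr x 0 ∧
      b.repr (-(t • b 1) + x) 1 = b.repr x 1 - t := by
    intro t x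
    constructor <;>
    · simp [map_add, map_neg, _root_.map_smul, Finsupp.single_apply]
      try ring
  ext x
  simp only [Set.mem_iUnion, Finset.mem_range, exists_prop]
  constructor
  · intro hx
    rw [latSet_eq_norm] at hx
    obtain ⟨h0, h1⟩ := hx
    set r : ℤ_[p] := ⟨b.repr x 1, h1⟩ with hr
    refine ⟨r.appr k, PadicInt.appr_lt r k, ?_⟩
    rw [Set.mem_vadd_set_iff_neg_vadd_mem, vadd_eq_add, mem_shrink]
    refine ⟨by rw [(hrepr _ x).1]; exact h0, ?_⟩
    rw [(hrepr _ x).2]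
    have hspec := (PadicInt.norm_le_pow_iff_mem_span_pow (r - (r.appr k : ℤ_[p])) k).mpr
      (PadicInt.appr_spec k r)
    have hcoe : ((r - (r.appr k : ℤ_[p]) : ℤ_[p]) : ℚ_[p]) = b.repr x 1 - (r.appr k : ℚ_[p]) := by
      push_cast [hr]
      rfl
    rw [PadicInt.norm_def, hcoe] at hspec
    exact hspec
  · rintro ⟨j, hj, hx⟩
    rw [Set.mem_vadd_set_iff_neg_vadd_mem, vadd_eq_add, mem_shrink] at hx
    obtain ⟨g0, g1⟩ := hx
    rw [(hrepr _ x).1] at g0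
    rw [(hrepr _ x).2] at g1
    rw [latSet_eq_norm]
    refine ⟨g0, ?_⟩
    have hjn : ‖((j : ℚ_[p]))‖ ≤ 1 := by
      have := Padic.norm_int_le_one (j : ℤ) (p := p)
      push_cast at this ⊢
      exact this
    calc ‖b.repr x 1‖ = ‖(b.repr x 1 - j) + j‖ := by ring_nf
      _ ≤ max ‖b.repr x 1 - (j : ℚ_[p])‖ ‖((j : ℚ_[p]))‖ := Padic.nonarchimedean _ _
      _ ≤ 1 := by
          refine max_le (g1.trans ?_) hjn
          apply zpow_le_one_of_nonpos₀
          · exact_mod_cast hp.1.one_le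
          · omega

lemma cosets_disjoint (b : Module.Basis (Fin 2) ℚ_[p] (Fin 2 → ℚ_[p])) (k : ℕ) :
    (↑(Finset.range (p ^ k)) : Set ℕ).PairwiseDisjoint
      (fun j => ((j : ℚ_[p]) • b 1 +ᵥ latSet (shrink b k))) := by
  intro i hi j hj hij
  simp only [Finset.coe_range, Set.mem_Iio] at hi hj
  rw [Function.onFun, Set.disjoint_left]
  rintro x hxi hxj
  rw [Set.mem_vadd_set_iff_neg_vadd_mem, vadd_eq_add, mem_shrink] at hxi hxj
  have hrepr : ∀ (t : ℚ_[p]), b.repr (-(t • b 1) + x) 1 = b.repr x 1 - t := by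
    intro t
    simp [map_add, map_neg, _root_.map_smul, Finsupp.single_apply]
    ring
  rw [hrepr] at hxi hxj
  have hd : ‖((i : ℚ_[p])) - j‖ ≤ (p : ℝ) ^ (-k : ℤ) := by
    calc ‖((i : ℚ_[p])) - j‖ = ‖(b.repr x 1 - j) + -(b.repr x 1 - i)‖ := by ring_nf
      _ ≤ max ‖b.repr x 1 - (j : ℚ_[p])‖ ‖-(b.repr x 1 - (i : ℚ_[p]))‖ :=
          Padic.nonarchimedean _ _
      _ ≤ _ := by rw [norm_neg]; exact max_le hxj.2 hxi.2
  have hdvd : ((p : ℤ) ^ k) ∣ ((i : ℤ) - j) := by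
    rw [← Padic.norm_int_le_pow_iff_dvd ((i : ℤ) - j) k (p := p)]
    push_cast
    exact hd
  have : (i : ℤ) - j = 0 := by
    apply Int.eq_zero_of_abs_lt_dvd hdvd
    rw [abs_sub_lt_iff]
    rw [show ((p : ℤ) ^ k) = ((p ^ k : ℕ) : ℤ) by push_cast; ring]
    omega
  exact hij (by omega)

variable [MeasurableSpace (Fin 2 → ℚ_[p])] [BorelSpace (Fin 2 → ℚ_[p])]
variable (μ : Measure (Fin 2 → ℚ_[p])) [μ.IsAddHaarMeasure]

lemma meas_shrink (b : Module.Basis (Fin 2) ℚ_[p] (Fin 2 → ℚ_[p])) (k : ℕ) :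
    μ (latSet b) = (p : ENNReal) ^ (k : ℕ) * μ (latSet (shrink b k)) := by
  rw [latSet_eq_biUnion b k]
  have hmeas : ∀ j ∈ Finset.range (p ^ k),
      MeasurableSet ((j : ℚ_[p]) • b 1 +ᵥ latSet (shrink b k)) := by
    intro j _
    have hcl : IsClosed ((fun x => (j : ℚ_[p]) • b 1 +ᵥ x) '' latSet (shrink b k)) :=
      (Homeomorph.addLeft ((j : ℚ_[p]) • b 1)).isClosedMap _ (isClosed_latSet (shrink b k))
    rw [Set.image_vadd] at hcl
    exact hcl.measurableSet
  rw [measure_biUnion_finset (cosets_disjoint b k) hmeas]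
  have hvadd : ∀ j : ℕ, μ ((j : ℚ_[p]) • b 1 +ᵥ latSet (shrink b k)) = μ (latSet (shrink b k)) :=
    fun j => measure_vadd μ _ _
  rw [Finset.sum_congr rfl fun j _ => hvadd j, Finset.sum_const, Finset.card_range,
    nsmul_eq_mul]
  push_cast
  ring

lemma meas_lattice (halt : ∀ v, Δ v v = 0)
    (hnorm : ∀ M : Set (Fin 2 → ℚ_[p]), IsLattice M → dualLattice Δ M = M → μ M = 1)
    (b : Module.Basis (Fin 2) ℚ_[p] (Fin 2 → ℚ_[p])) (n : ℤ)
    (hb : Δ (b 0) (b 1) = (p : ℚ_[p]) ^ n) :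
    μ (latSet b) = (p : ENNReal) ^ (-n) := by
  have hp0 : (p : ENNReal) ≠ 0 := by exact_mod_cast hp.1.ne_zero
  have hpt : (p : ENNReal) ≠ ⊤ := ENNReal.natCast_ne_top p
  have hqne : ((p : ℚ_[p]) ^ (-n)) ≠ 0 := zpow_ne_zero _ (by exact_mod_cast hp.1.ne_zero)
  set g := scaleB b ((p : ℚ_[p]) ^ (-n)) hqne 1 with hg
  have hg0 : g 0 = b 0 := scaleB_other _ _ _ (by norm_num)
  have hg1 : g 1 = ((p : ℚ_[p]) ^ (-n)) • b 1 := scaleB_self _ _ _ 1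
  have hgd : Δ (g 0) (g 1) = 1 := by
    rw [hg0, hg1, _root_.map_smul, smul_eq_mul, hb, ← zpow_add₀
      (by exact_mod_cast hp.1.ne_zero : ((p : ℚ_[p])) ≠ 0), neg_add_cancel, zpow_zero]
  have hμg : μ (latSet g) = 1 := hnorm _ (isLattice_latSet g) (dual_unimodular Δ halt g hgd)
  rcases le_or_gt 0 n with hn | hn
  · set k := n.toNat with hk
    have hkn : (k : ℤ) = n := Int.toNat_of_nonneg hn
    have hpk : ((p : ℚ_[p]) ^ (k : ℕ)) = (p : ℚ_[p]) ^ (n : ℤ) := by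
      rw [← hkn, zpow_natCast]
    have hsh : latSet (shrink g k) = latSet b := by
      apply latSet_congr
      · rw [shrink, scaleB_other _ _ _ (by norm_num), hg0]
      · rw [shrink, scaleB_self, hg1, smul_smul, hpk, ← zpow_add₀
          (by exact_mod_cast hp.1.ne_zero : ((p : ℚ_[p])) ≠ 0), add_neg_cancel, zpow_zero, one_smul]
    have hms := meas_shrink μ g k
    rw [hsh, hμg] at hms
    have hinv : μ (latSet b) = ((p : ENNReal) ^ (k : ℕ))⁻¹ :=
      ENNReal.eq_inv_of_mul_eq_one_left (by rw [mul_comm]; exact hms.symm)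
    rw [hinv, ENNReal.zpow_neg, ← hkn]
    norm_cast
  · set k := (-n).toNat with hk
    have hkn : (k : ℤ) = -n := Int.toNat_of_nonneg (by omega)
    have hpk : ((p : ℚ_[p]) ^ (k : ℕ)) = (p : ℚ_[p]) ^ (-n : ℤ) := by
      rw [← hkn, zpow_natCast]
    have hsh : latSet (shrink b k) = latSet g := by
      apply latSet_congr
      · rw [shrink, scaleB_other _ _ _ (by norm_num), hg0]
      · rw [shrink, scaleB_self, hg1, hpk]
    have hms := meas_shrink μ b k
    rw [hsh, hμg, mul_one] at hms
    rw [hms, ← hkn]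
    norm_cast

omit [MeasurableSpace (Fin 2 → ℚ_[p])] [BorelSpace (Fin 2 → ℚ_[p])] in
lemma ennreal_zpow_inj {m n : ℤ} (h : (p : ENNReal) ^ m = (p : ENNReal) ^ n) : m = n := by
  have h1 : (1 : ENNReal) < p := by exact_mod_cast hp.1.one_lt
  have hp0 : (p : ENNReal) ≠ 0 := by exact_mod_cast hp.1.ne_zero
  have hpt : (p : ENNReal) ≠ ⊤ := ENNReal.natCast_ne_top p
  have key : ∀ a b : ℤ, a < b → (p : ENNReal) ^ a < (p : ENNReal) ^ b := by
    intro a b hab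
    have hsplit : (p : ENNReal) ^ b = (p : ENNReal) ^ a * (p : ENNReal) ^ (b - a) := by
      rw [← ENNReal.zpow_add hp0 hpt]; ring_nf
    rw [hsplit]
    have h1b : 1 < (p : ENNReal) ^ (b - a) := by
      calc (1 : ENNReal) < p := h1
        _ = (p : ENNReal) ^ (1 : ℤ) := (zpow_one _).symm
        _ ≤ (p : ENNReal) ^ (b - a) := ENNReal.zpow_le_of_le h1.le (by omega)
    calc (p : ENNReal) ^ a = (p : ENNReal) ^ a * 1 := (mul_one _).symm
      _ < (p : ENNReal) ^ a * (p : ENNReal) ^ (b - a) :=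
        ENNReal.mul_lt_mul_right (ENNReal.zpow_pos hp0 hpt a).ne'
          (ENNReal.zpow_lt_top hp0 hpt a).ne h1b
  by_contra hne
  rcases (Ne.lt_or_gt hne) with hlt | hlt
  · exact absurd h (key _ _ hlt).ne
  · exact absurd h.symm (key _ _ hlt).ne

end SympTrans

open SympTrans in
/-- **Transitivity of the symplectic group on lattices of equal measure.**
If `L₁` and `L₂` are lattices in the two-dimensional `p`-adic symplectic space `(ℚ_p², Δ)`
with equal Haar measures `|L₁| = |L₂|` (Haar measure normalized so that self-dual lattices
have measure `1`), then there is a symplectic transformation `S ∈ Sp(F,Δ)` with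
`S·L₁ = L₂`. -/
theorem exists_symplectic_map_of_measure_eq
    {p : ℕ} [Fact p.Prime]
    [MeasurableSpace (Fin 2 → ℚ_[p])] [BorelSpace (Fin 2 → ℚ_[p])]
    (μ : Measure (Fin 2 → ℚ_[p])) [μ.IsAddHaarMeasure]
    (Δ : (Fin 2 → ℚ_[p]) →ₗ[ℚ_[p]] (Fin 2 → ℚ_[p]) →ₗ[ℚ_[p]] ℚ_[p])
    (halt : ∀ v, Δ v v = 0)
    (hnd : ∀ v, (∀ w, Δ v w = 0) → v = 0)
    (hnorm : ∀ M : Set (Fin 2 → ℚ_[p]), IsLattice M → dualLattice Δ M = M → μ M = 1)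
    (L₁ L₂ : Set (Fin 2 → ℚ_[p])) (hL₁ : IsLattice L₁) (hL₂ : IsLattice L₂)
    (hμ : μ L₁ = μ L₂) :
    ∃ S : (Fin 2 → ℚ_[p]) ≃ₗ[ℚ_[p]] (Fin 2 → ℚ_[p]),
      (∀ u v, Δ (S u) (S v) = Δ u v) ∧ S '' L₁ = L₂ := by
  obtain ⟨b₁, n₁, hd₁, hE₁⟩ := exists_adapted Δ halt hnd L₁ hL₁
  obtain ⟨b₂, n₂, hd₂, hE₂⟩ := exists_adapted Δ halt hnd L₂ hL₂
  have hm₁ := meas_lattice Δ μ halt hnorm b₁ n₁ hd₁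
  have hm₂ := meas_lattice Δ μ halt hnorm b₂ n₂ hd₂
  have hn : n₁ = n₂ := by
    have hpe : (p : ENNReal) ^ (-n₁) = (p : ENNReal) ^ (-n₂) := by
      rw [← hm₁, ← hm₂, ← hE₁, ← hE₂]
      exact hμ
    have := ennreal_zpow_inj hpe
    omega
  subst hn
  refine ⟨b₁.equiv b₂ (Equiv.refl _), ?_, ?_⟩
  · intro u v
    have hu := b₁.sum_repr u
    rw [Fin.sum_univ_two] at hu
    have hv := b₁.sum_repr v
    rw [Fin.sum_univ_two] at hv
    have hSu : (b₁.equiv b₂ (Equiv.refl _)) u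
        = (b₁.repr u 0) • b₂ 0 + (b₁.repr u 1) • b₂ 1 := by
      conv_lhs => rw [← hu]
      simp [map_add, _root_.map_smul, Module.Basis.equiv_apply]
    have hSv : (b₁.equiv b₂ (Equiv.refl _)) v
        = (b₁.repr v 0) • b₂ 0 + (b₁.repr v 1) • b₂ 1 := by
      conv_lhs => rw [← hv]
      simp [map_add, _root_.map_smul, Module.Basis.equiv_apply]
    rw [hSu, hSv, delta_formula Δ halt _ _ _ _ _ _, hd₂]
    conv_rhs => rw [← hu, ← hv]
    rw [delta_formula Δ halt _ _ _ _ _ _, hd₁]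
  · rw [hE₁, hE₂]
    ext y
    constructor
    · rintro ⟨x, ⟨a, c, rfl⟩, rfl⟩
      exact ⟨a, c, by simp [map_add, _root_.map_smul, Module.Basis.equiv_apply]⟩
    · rintro ⟨a, c, rfl⟩
      refine ⟨(a : ℚ_[p]) • b₁ 0 + (c : ℚ_[p]) • b₁ 1, ⟨a, c, rfl⟩, ?_⟩
      simp [map_add, _root_.map_smul, Module.Basis.equiv_apply]
end

section
/- The indicator function h_L of a lattice L in a p-adic symplectic space (F, Δ) is Δ-positive definite: for any points z₁,…,z_n ∈ F and complex numbers c₁,…,c_n, the sum Σ_{i,j} c_i·conj(c_j)·h_L(z_i - z_j)·χ(-½Δ(z_i,z_j)) is a nonnegative real number, provided |L| ≤ 1. -/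
open MeasureTheory

open scoped ENNReal Pointwise

namespace PosDefAux

variable {p : ℕ} [Fact p.Prime]

lemma lattice_zero_mem {L : Set (Fin 2 → ℚ_[p])} (hL : IsLattice L) : (0 : Fin 2 → ℚ_[p]) ∈ L := by
  obtain ⟨b, rfl⟩ := hL
  exact ⟨0, 0, by simp⟩

lemma lattice_sub_mem {L : Set (Fin 2 → ℚ_[p])} (hL : IsLattice L) {x y : Fin 2 → ℚ_[p]}
    (hx : x ∈ L) (hy : y ∈ L) : x - y ∈ L := by
  obtain ⟨b, rfl⟩ := hL
  obtain ⟨a, c, rfl⟩ := hx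
  obtain ⟨a', c', rfl⟩ := hy
  refine ⟨a - a', c - c', ?_⟩
  push_cast
  rw [sub_smul, sub_smul]
  abel

lemma lattice_add_mem {L : Set (Fin 2 → ℚ_[p])} (hL : IsLattice L) {x y : Fin 2 → ℚ_[p]}
    (hx : x ∈ L) (hy : y ∈ L) : x + y ∈ L := by
  have h0 : (0 : Fin 2 → ℚ_[p]) - y ∈ L := lattice_sub_mem hL (lattice_zero_mem hL) hy
  have := lattice_sub_mem hL hx h0
  simpa using this

lemma lattice_norm_le (x : ℚ_[p]) (a c a' c' : ℤ_[p]) :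
    ‖(a : ℚ_[p]) * (c' : ℚ_[p]) - (c : ℚ_[p]) * (a' : ℚ_[p])‖ ≤ 1 := by
  rw [sub_eq_add_neg]
  refine le_trans (Padic.nonarchimedean _ _) (max_le ?_ ?_)
  · rw [norm_mul]
    exact mul_le_one₀ a.2 (norm_nonneg _) c'.2
  · rw [norm_neg, norm_mul]
    exact mul_le_one₀ c.2 (norm_nonneg _) a'.2

lemma delta_antisymm (Δ : (Fin 2 → ℚ_[p]) →ₗ[ℚ_[p]] (Fin 2 → ℚ_[p]) →ₗ[ℚ_[p]] ℚ_[p])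
    (halt : ∀ v, Δ v v = 0) (u v : Fin 2 → ℚ_[p]) : Δ u v = -Δ v u := by
  have h := halt (u + v)
  simp only [map_add, LinearMap.add_apply, halt] at h
  linear_combination h

lemma delta_expand (Δ : (Fin 2 → ℚ_[p]) →ₗ[ℚ_[p]] (Fin 2 → ℚ_[p]) →ₗ[ℚ_[p]] ℚ_[p])
    (halt : ∀ v, Δ v v = 0) (u v : Fin 2 → ℚ_[p]) (a c a' c' : ℚ_[p]) :
    Δ (a • u + c • v) (a' • u + c' • v) = (a * c' - c * a') * Δ u v := by
  have h := delta_antisymm Δ halt v u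
  simp only [map_add, _root_.map_smul, LinearMap.add_apply, LinearMap.smul_apply,
    smul_eq_mul, halt]
  linear_combination (a * c' - c * a') * h * 0 + (c * a') * h

lemma norm_delta_le
    [MeasurableSpace (Fin 2 → ℚ_[p])] [BorelSpace (Fin 2 → ℚ_[p])]
    (μ : Measure (Fin 2 → ℚ_[p])) [μ.IsAddHaarMeasure]
    (Δ : (Fin 2 → ℚ_[p]) →ₗ[ℚ_[p]] (Fin 2 → ℚ_[p]) →ₗ[ℚ_[p]] ℚ_[p])
    (halt : ∀ v, Δ v v = 0)
    (hnd : ∀ v, (∀ w, Δ v w = 0) → v = 0)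
    (hnorm : ∀ M : Set (Fin 2 → ℚ_[p]), IsLattice M → dualLattice Δ M = M → μ M = 1)
    (L : Set (Fin 2 → ℚ_[p])) (hL : IsLattice L) (hμL : μ L ≤ 1) :
    ∀ u ∈ L, ∀ v ∈ L, ‖Δ u v‖ ≤ 1 := by
  have hLlatt := hL
  obtain ⟨b, rfl⟩ := hL
  set t := Δ (b 0) (b 1) with ht_def
  have ht0 : t ≠ 0 := by
    intro h
    apply b.ne_zero 0
    apply hnd
    intro w
    conv_lhs => rw [← b.sum_repr w]
    simp only [Fin.sum_univ_two, map_add, _root_.map_smul, LinearMap.add_apply,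
      LinearMap.smul_apply, smul_eq_mul, halt, ← ht_def, h]
    ring
  -- main claim: ‖t‖ ≤ 1
  have htle : ‖t‖ ≤ 1 := by
    by_contra h1
    push_neg at h1
    set s : ℚ_[p] := t⁻¹ with hs_def
    have hs0 : s ≠ 0 := inv_ne_zero ht0
    have hst : s * t = 1 := inv_mul_cancel₀ ht0
    have hts : t * s = 1 := mul_inv_cancel₀ ht0
    have hsnorm : ‖s‖ < 1 := by
      rw [hs_def, norm_inv, inv_lt_one_iff₀]
      right; exact h1
    set b' : Module.Basis (Fin 2) ℚ_[p] (Fin 2 → ℚ_[p]) :=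
      b.unitsSMul ![Units.mk0 s hs0, 1] with hb'_def
    have hb'0 : b' 0 = s • b 0 := by
      rw [hb'_def, Module.Basis.unitsSMul_apply]; rfl
    have hb'1 : b' 1 = b 1 := by
      rw [hb'_def, Module.Basis.unitsSMul_apply]
      show ((1 : ℚ_[p]ˣ) : ℚ_[p]) • b 1 = b 1
      simp
    set M : Set (Fin 2 → ℚ_[p]) :=
      {x | ∃ a c : ℤ_[p], x = (a : ℚ_[p]) • b' 0 + (c : ℚ_[p]) • b' 1} with hM_def
    have hMlatt : IsLattice M := ⟨b', rfl⟩
    have hba : Δ (b 1) (b 0) = -t := by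
      rw [ht_def]; exact delta_antisymm Δ halt (b 1) (b 0)
    -- dual of M is M
    have hdual : dualLattice Δ M = M := by
      ext u
      constructor
      · intro h
        have h2 : ‖Δ u (b' 1)‖ ≤ 1 := h _ ⟨0, 1, by push_cast; simp⟩
        have h1' : ‖Δ u (b' 0)‖ ≤ 1 := h _ ⟨1, 0, by push_cast; simp⟩
        have hu : u = (b.repr u 0) • b 0 + (b.repr u 1) • b 1 := by
          conv_lhs => rw [← b.sum_repr u]
          simp only [Fin.sum_univ_two]
        set α := b.repr u 0 with hα
        set β := b.repr u 1 with hβ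
        have e1 : Δ u (b' 0) = -β := by
          rw [hu, hb'0]
          simp only [map_add, _root_.map_smul, LinearMap.add_apply, LinearMap.smul_apply,
            smul_eq_mul, halt, hba]
          linear_combination (-β) * hst
        have e2 : Δ u (b' 1) = α * t := by
          rw [hu, hb'1]
          simp only [map_add, _root_.map_smul, LinearMap.add_apply, LinearMap.smul_apply,
            smul_eq_mul, halt, ← ht_def]
          ring
        rw [e1, norm_neg] at h1'
        rw [e2] at h2
        refine ⟨⟨α * t, h2⟩, ⟨β, h1'⟩, ?_⟩
        rw [hb'0, hb'1]
        show u = (α * t) • (s • b 0) + β • b 1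
        rw [smul_smul, mul_assoc, hts, mul_one]
        exact hu
      · rintro ⟨a, c, rfl⟩ v ⟨a', c', rfl⟩
        rw [hb'0, hb'1, delta_expand Δ halt]
        have : Δ (s • b 0) (b 1) = 1 := by
          rw [_root_.map_smul]
          simp only [LinearMap.smul_apply, smul_eq_mul, ← ht_def]
          exact hst
        rw [this, mul_one]
        exact lattice_norm_le 0 a c a' c'
    have hμM : μ M = 1 := hnorm M hMlatt hdual
    -- M is compact, hence closed and measurable
    have hcont : Continuous (fun ac : ℤ_[p] × ℤ_[p] =>
        (ac.1 : ℚ_[p]) • b' 0 + (ac.2 : ℚ_[p]) • b' 1) := by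
      exact ((continuous_subtype_val.comp continuous_fst).smul continuous_const).add
        ((continuous_subtype_val.comp continuous_snd).smul continuous_const)
    have hMrange : M = Set.range (fun ac : ℤ_[p] × ℤ_[p] =>
        (ac.1 : ℚ_[p]) • b' 0 + (ac.2 : ℚ_[p]) • b' 1) := by
      ext x
      constructor
      · rintro ⟨a, c, rfl⟩; exact ⟨(a, c), rfl⟩
      · rintro ⟨⟨a, c⟩, rfl⟩; exact ⟨a, c, rfl⟩
    have hMcomp : IsCompact M := hMrange ▸ isCompact_range hcont
    have hMmeas : MeasurableSet M := hMcomp.isClosed.measurableSet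
    -- M ⊆ L
    have hMsub : M ⊆ {x | ∃ a c : ℤ_[p], x = (a : ℚ_[p]) • b 0 + (c : ℚ_[p]) • b 1} := by
      rintro x ⟨a, c, rfl⟩
      refine ⟨⟨(a : ℚ_[p]) * s, ?_⟩, c, ?_⟩
      · rw [norm_mul]
        exact mul_le_one₀ a.2 (norm_nonneg _) hsnorm.le
      · rw [hb'0, hb'1]
        show (a : ℚ_[p]) • (s • b 0) + (c : ℚ_[p]) • b 1
          = ((a : ℚ_[p]) * s) • b 0 + (c : ℚ_[p]) • b 1
        rw [smul_smul]
    have hb0L : b 0 ∈ {x | ∃ a c : ℤ_[p], x = (a : ℚ_[p]) • b 0 + (c : ℚ_[p]) • b 1} :=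
      ⟨1, 0, by push_cast; simp⟩
    have hb0M : b 0 ∉ M := by
      rintro ⟨a, c, heq⟩
      have hΔ := congrArg (fun x => Δ x (b 1)) heq
      simp only [map_add, _root_.map_smul, LinearMap.add_apply, LinearMap.smul_apply,
        smul_eq_mul, hb'0, hb'1, halt, ← ht_def] at hΔ
      have hta : t = (a : ℚ_[p]) := by linear_combination hΔ + (a : ℚ_[p]) * hst
      rw [hta] at h1
      exact absurd a.2 (not_le.2 h1)
    -- disjointness and measure
    have hdisj : Disjoint M ((b 0) +ᵥ M) := by
      rw [Set.disjoint_left]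
      rintro x hxM hxv
      obtain ⟨m, hm, rfl⟩ := hxv
      have := lattice_sub_mem hMlatt hxM hm
      simp only [vadd_eq_add, add_sub_cancel_right] at this
      exact hb0M this
    have hvmeas : MeasurableSet ((b 0) +ᵥ M) := by
      have : (b 0) +ᵥ M = (fun y => -(b 0) + y) ⁻¹' M := by
        ext y
        rw [Set.mem_vadd_set_iff_neg_vadd_mem]
        rfl
      rw [this]
      exact (measurable_const_add _) hMmeas
    have hvsub : (b 0) +ᵥ M ⊆ {x | ∃ a c : ℤ_[p], x = (a : ℚ_[p]) • b 0 + (c : ℚ_[p]) • b 1} := by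
      rintro x ⟨m, hm, rfl⟩
      exact lattice_add_mem hLlatt hb0L (hMsub hm)
    have hμv : μ ((b 0) +ᵥ M) = μ M := measure_vadd _ _ _
    have hle : μ M + μ ((b 0) +ᵥ M) ≤ μ {x | ∃ a c : ℤ_[p], x = (a : ℚ_[p]) • b 0 + (c : ℚ_[p]) • b 1} := by
      rw [← measure_union hdisj hvmeas]
      exact measure_mono (Set.union_subset hMsub hvsub)
    rw [hμM, hμv, hμM] at hle
    have : (2 : ℝ≥0∞) ≤ 1 := by
      calc (2 : ℝ≥0∞) = 1 + 1 := by norm_num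
        _ ≤ 1 := le_trans hle hμL
    norm_num at this
  -- conclude
  rintro u ⟨a, c, rfl⟩ v ⟨a', c', rfl⟩
  rw [delta_expand Δ halt, ← ht_def, norm_mul]
  calc ‖(a : ℚ_[p]) * (c' : ℚ_[p]) - (c : ℚ_[p]) * (a' : ℚ_[p])‖ * ‖t‖
      ≤ 1 * 1 := mul_le_mul (lattice_norm_le 0 a c a' c') htle (norm_nonneg _) zero_le_one
    _ = 1 := by norm_num

end PosDefAux

/-- **`Δ`-positive definiteness of the indicator of a lattice.**
Let `p` be an odd prime, `(ℚ_p², Δ)` a two-dimensional `p`-adic symplectic space with Haar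
measure `μ` normalized so that self-dual lattices have measure `1`, `χ(x) = exp(2πi{x}_p)`
the standard additive character (continuous, unitary, with kernel exactly `ℤ_p`), and `L`
a lattice with `|L| ≤ 1`.  Then for all points `z₁,…,z_n` and complex numbers `c₁,…,c_n`,
the sum `Σ_{i,j} cᵢ conj(cⱼ) h_L(zᵢ - zⱼ) χ(-½Δ(zᵢ,zⱼ))` is a nonnegative real number. -/
theorem indicator_lattice_pos_def
    {p : ℕ} [Fact p.Prime] (hodd : p ≠ 2)
    [MeasurableSpace (Fin 2 → ℚ_[p])] [BorelSpace (Fin 2 → ℚ_[p])]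
    (μ : Measure (Fin 2 → ℚ_[p])) [μ.IsAddHaarMeasure]
    (Δ : (Fin 2 → ℚ_[p]) →ₗ[ℚ_[p]] (Fin 2 → ℚ_[p]) →ₗ[ℚ_[p]] ℚ_[p])
    (halt : ∀ v, Δ v v = 0)
    (hnd : ∀ v, (∀ w, Δ v w = 0) → v = 0)
    (hnorm : ∀ M : Set (Fin 2 → ℚ_[p]), IsLattice M → dualLattice Δ M = M → μ M = 1)
    (χ : ℚ_[p] → ℂ) (hχ_cont : Continuous χ)
    (hχ_add : ∀ x y, χ (x + y) = χ x * χ y)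
    (hχ_norm : ∀ x, ‖χ x‖ = 1)
    (hχ_ker : ∀ x, χ x = 1 ↔ ‖x‖ ≤ 1)
    (L : Set (Fin 2 → ℚ_[p])) (hL : IsLattice L) (hμL : μ L ≤ 1)
    (n : ℕ) (z : Fin n → (Fin 2 → ℚ_[p])) (c : Fin n → ℂ) :
    0 ≤ (∑ i, ∑ j, c i * starRingEnd ℂ (c j) *
          Set.indicator L (fun _ => (1 : ℂ)) (z i - z j) *
          χ (-((2 : ℚ_[p])⁻¹ * Δ (z i) (z j)))).re ∧
      (∑ i, ∑ j, c i * starRingEnd ℂ (c j) *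
          Set.indicator L (fun _ => (1 : ℂ)) (z i - z j) *
          χ (-((2 : ℚ_[p])⁻¹ * Δ (z i) (z j)))).im = 0 := by
  classical
  -- basic facts about χ
  have hχ0 : χ 0 = 1 := (hχ_ker 0).2 (by simp)
  have hχ_inv : ∀ x, χ (-x) = (χ x)⁻¹ := by
    intro x
    refine (inv_eq_of_mul_eq_one_right ?_).symm
    rw [← hχ_add]
    simpa using hχ0
  have hχ_conj : ∀ x, starRingEnd ℂ (χ x) = χ (-x) := by
    intro x
    rw [hχ_inv]
    refine (inv_eq_of_mul_eq_one_right ?_).symm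
    rw [Complex.mul_conj, Complex.normSq_eq_norm_sq, hχ_norm]
    norm_num
  have htriv : ∀ x : ℚ_[p], ‖x‖ ≤ 1 → χ x = 1 := fun x h => (hχ_ker x).2 h
  -- 2 is a unit
  have h2norm : ‖(2 : ℚ_[p])⁻¹‖ = 1 := by
    have h2 : ‖(2 : ℚ_[p])‖ = 1 := by
      have hle : ‖((2 : ℤ) : ℚ_[p])‖ ≤ 1 := Padic.norm_int_le_one 2
      have hlt : ¬ ‖((2 : ℤ) : ℚ_[p])‖ < 1 := by
        rw [Padic.norm_intCast_lt_one_iff]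
        intro hdvd
        have hpd : p ∣ 2 := by exact_mod_cast hdvd
        rcases Nat.Prime.eq_one_or_self_of_dvd Nat.prime_two p hpd with h | h
        · exact (Fact.out : p.Prime).one_lt.ne' h
        · exact hodd h
      have : ‖((2 : ℤ) : ℚ_[p])‖ = 1 := le_antisymm hle (not_lt.1 hlt)
      simpa using this
    rw [norm_inv, h2]; norm_num
  have hB := PosDefAux.norm_delta_le μ Δ halt hnd hnorm L hL hμL
  -- representative choice
  set S : Fin n → Finset (Fin n) :=
    fun i => Finset.univ.filter (fun j => z i - z j ∈ L) with hS_def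
  have hiS : ∀ i, i ∈ S i := by
    intro i
    refine Finset.mem_filter.2 ⟨Finset.mem_univ i, by simpa using PosDefAux.lattice_zero_mem hL⟩
  set r : Fin n → Fin n := fun i => (S i).min' ⟨i, hiS i⟩ with hr_def
  have hrmem : ∀ i, z i - z (r i) ∈ L := by
    intro i
    have := (S i).min'_mem ⟨i, hiS i⟩
    exact (Finset.mem_filter.1 this).2
  have hSeq : ∀ i j, z i - z j ∈ L → S i = S j := by
    intro i j hij
    ext k
    simp only [hS_def, Finset.mem_filter, Finset.mem_univ, true_and]
    constructor
    · intro hk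
      have h2 := PosDefAux.lattice_sub_mem hL hk hij
      have h3 : (z i - z k) - (z i - z j) = z j - z k := by abel
      rwa [h3] at h2
    · intro hk
      have hneg : z j - z i ∈ L := by
        have := PosDefAux.lattice_sub_mem hL (PosDefAux.lattice_zero_mem hL) hij
        have h3 : (0 : Fin 2 → ℚ_[p]) - (z i - z j) = z j - z i := by abel
        rwa [h3] at this
      have h2 := PosDefAux.lattice_sub_mem hL hk hneg
      have h3 : (z j - z k) - (z j - z i) = z i - z k := by abel
      rwa [h3] at h2
  have hreq : ∀ i j, z i - z j ∈ L → r i = r j := by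
    intro i j hij
    have h := hSeq i j hij
    refine le_antisymm (Finset.min'_le _ _ ?_) (Finset.min'_le _ _ ?_)
    · rw [h]; exact (S j).min'_mem ⟨j, hiS j⟩
    · rw [← h]; exact (S i).min'_mem ⟨i, hiS i⟩
  have hrsame : ∀ i j, r i = r j → z i - z j ∈ L := by
    intro i j h
    have h2 := hrmem j
    rw [← h] at h2
    have h3 := PosDefAux.lattice_sub_mem hL (hrmem i) h2
    have h4 : (z i - z (r i)) - (z j - z (r i)) = z i - z j := by abel
    rwa [h4] at h3
  -- the vector d and fiber sums g
  set d : Fin n → ℂ :=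
    fun i => c i * χ ((2 : ℚ_[p])⁻¹ * Δ (z (r i)) (z i - z (r i))) with hd_def
  set g : Fin n → ℂ :=
    fun k => ∑ i ∈ Finset.univ.filter (fun i => r i = k), d i with hg_def
  -- pointwise identity on the diagonal blocks
  have hterm : ∀ i j, r i = r j →
      c i * starRingEnd ℂ (c j) * Set.indicator L (fun _ => (1 : ℂ)) (z i - z j) *
        χ (-((2 : ℚ_[p])⁻¹ * Δ (z i) (z j))) = d i * starRingEnd ℂ (d j) := by
    intro i j hrij
    have hmem : z i - z j ∈ L := hrsame i j hrij
    have hind : Set.indicator L (fun _ => (1 : ℂ)) (z i - z j) = 1 :=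
      Set.indicator_of_mem hmem _
    have hmemj : z j - z (r i) ∈ L := by rw [hrij]; exact hrmem j
    have hC1 : χ (-((2 : ℚ_[p])⁻¹ * Δ (z i - z (r i)) (z j - z (r i)))) = 1 := by
      apply htriv
      rw [norm_neg, norm_mul, h2norm, one_mul]
      exact hB _ (hrmem i) _ hmemj
    have halg : -((2 : ℚ_[p])⁻¹ * Δ (z i) (z j)) =
        (2 : ℚ_[p])⁻¹ * Δ (z (r i)) (z i - z (r i)) +
        (-((2 : ℚ_[p])⁻¹ * Δ (z (r i)) (z j - z (r i)))) +
        (-((2 : ℚ_[p])⁻¹ * Δ (z i - z (r i)) (z j - z (r i)))) := by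
      simp only [map_sub, LinearMap.sub_apply]
      have hA := PosDefAux.delta_antisymm Δ halt (z i) (z (r i))
      have hK := halt (z (r i))
      linear_combination (-(2 : ℚ_[p])⁻¹) * hA + (2 : ℚ_[p])⁻¹ * hK
    rw [hind, halg, hχ_add, hχ_add, hC1, mul_one, hd_def]
    simp only [map_mul, hχ_conj, hrij]
    ring
  -- terms vanish off the diagonal blocks
  have hzero : ∀ i j, r j ≠ r i →
      c i * starRingEnd ℂ (c j) * Set.indicator L (fun _ => (1 : ℂ)) (z i - z j) *
        χ (-((2 : ℚ_[p])⁻¹ * Δ (z i) (z j))) = 0 := by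
    intro i j hne
    have hnot : z i - z j ∉ L := fun hmem => hne (hreq i j hmem).symm
    rw [Set.indicator_of_notMem hnot]
    ring
  -- main computation
  have key : (∑ i, ∑ j, c i * starRingEnd ℂ (c j) *
          Set.indicator L (fun _ => (1 : ℂ)) (z i - z j) *
          χ (-((2 : ℚ_[p])⁻¹ * Δ (z i) (z j)))) =
      ∑ k, g k * starRingEnd ℂ (g k) := by
    calc (∑ i, ∑ j, c i * starRingEnd ℂ (c j) *
          Set.indicator L (fun _ => (1 : ℂ)) (z i - z j) *
          χ (-((2 : ℚ_[p])⁻¹ * Δ (z i) (z j))))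
        = ∑ i, ∑ j ∈ Finset.univ.filter (fun j => r j = r i),
            c i * starRingEnd ℂ (c j) * Set.indicator L (fun _ => (1 : ℂ)) (z i - z j) *
            χ (-((2 : ℚ_[p])⁻¹ * Δ (z i) (z j))) := by
          refine Finset.sum_congr rfl fun i _ => ?_
          refine (Finset.sum_filter_of_ne fun j _ hne => ?_).symm
          by_contra hr
          exact hne (hzero i j hr)
      _ = ∑ i, d i * starRingEnd ℂ (g (r i)) := by
          refine Finset.sum_congr rfl fun i _ => ?_
          rw [hg_def]
          rw [map_sum, Finset.mul_sum]
          refine Finset.sum_congr rfl fun j hj => ?_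
          exact hterm i j ((Finset.mem_filter.1 hj).2).symm
      _ = ∑ k, ∑ i ∈ Finset.univ.filter (fun i => r i = k), d i * starRingEnd ℂ (g (r i)) :=
          (Finset.sum_fiberwise_of_maps_to (fun i _ => Finset.mem_univ (r i)) _).symm
      _ = ∑ k, g k * starRingEnd ℂ (g k) := by
          refine Finset.sum_congr rfl fun k _ => ?_
          rw [hg_def, Finset.sum_mul]
          refine Finset.sum_congr rfl fun i hi => ?_
          rw [(Finset.mem_filter.1 hi).2]
  have key2 : (∑ k, g k * starRingEnd ℂ (g k)) = ((∑ k, Complex.normSq (g k) : ℝ) : ℂ) := by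
    push_cast
    exact Finset.sum_congr rfl fun k _ => Complex.mul_conj (g k)
  rw [key, key2]
  constructor
  · rw [Complex.ofReal_re]
    exact Finset.sum_nonneg fun k _ => Complex.normSq_nonneg _
  · exact Complex.ofReal_im _
end
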